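/- There exist positive constants a and b such that for all sufficiently large x, a·x < θ(x) < b·x, where θ is the Chebyshev theta function. -/

import Mathlib

open Nat Finset Filter Asymptotics

noncomputable def theta (x : ℝ) : ℝ :=
  ∑ p ∈ (Finset.Icc 1 ⌊x⌋₊).filter Nat.Prime, Real.log p

lemma theta_eq (x : ℝ) : theta x = Real.log (primorial ⌊x⌋₊) := by
  have hfe : (Finset.Icc 1 ⌊x⌋₊).filter Nat.Prime
      = (Finset.range (⌊x⌋₊ + 1)).filter Nat.Prime := by
    ext p
    simp only [Finset.mem_filter, Finset.mem_Icc, Finset.mem_range, Nat.lt_succ_iff]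
    exact ⟨fun h => ⟨h.1.2, h.2⟩, fun h => ⟨⟨h.2.one_lt.le, h.1⟩, h.2⟩⟩
  rw [theta, hfe, primorial, Nat.cast_prod, Real.log_prod]
  intro p hp
  exact_mod_cast (Finset.mem_filter.1 hp).2.pos.ne'

lemma primorial_mono' : Monotone primorial := by
  intro m n h
  apply Finset.prod_le_prod_of_subset_of_one_le'
  · exact Finset.filter_subset_filter _ (Finset.range_subset_range.2 (by omega))
  · exact fun p hp _ => (Finset.mem_filter.1 hp).2.one_lt.le

lemma centralBinom_le_primorial (n : ℕ) (hn : 0 < n) :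
    centralBinom n ≤ (2 * n) ^ Nat.sqrt (2 * n) * primorial (2 * n) := by
  have n2_pos : 1 ≤ 2 * n := by omega
  set S := (Finset.range (2 * n + 1)).filter Nat.Prime with hS
  set f : ℕ → ℕ := fun x => x ^ (centralBinom n).factorization x with hf
  have hprod : ∏ x ∈ S, f x = ∏ x ∈ Finset.range (2 * n + 1), f x := by
    refine Finset.prod_filter_of_ne fun p _ h => ?_
    contrapose! h; dsimp only [f]
    rw [Nat.factorization_eq_zero_of_not_prime n.centralBinom h, _root_.pow_zero]
  rw [← n.prod_pow_factorization_centralBinom, ← hprod,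
    ← Finset.prod_filter_mul_prod_filter_not S (· ≤ Nat.sqrt (2 * n))]
  apply Nat.mul_le_mul
  · refine (Finset.prod_le_prod' fun p _ => (?_ : f p ≤ 2 * n)).trans ?_
    · exact Nat.pow_factorization_choose_le (by omega)
    have hcard : (Finset.Icc 1 (Nat.sqrt (2 * n))).card = Nat.sqrt (2 * n) := by
      rw [Nat.card_Icc, Nat.add_sub_cancel]
    rw [Finset.prod_const]
    refine pow_le_pow_right₀ n2_pos ((Finset.card_le_card fun x hx => ?_).trans hcard.le)
    obtain ⟨h1, h2⟩ := Finset.mem_filter.1 hx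
    exact Finset.mem_Icc.mpr ⟨(Finset.mem_filter.1 h1).2.one_lt.le, h2⟩
  · refine (Finset.prod_le_prod' fun p hp => (?_ : f p ≤ p)).trans ?_
    · obtain ⟨h1, h2⟩ := Finset.mem_filter.1 hp
      refine (Nat.pow_le_pow_right (Finset.mem_filter.1 h1).2.one_lt.le ?_).trans (pow_one p).le
      exact Nat.factorization_choose_le_one (Nat.sqrt_lt'.mp <| not_le.1 h2)
    exact Finset.prod_le_prod_of_subset_of_one_le' (Finset.filter_subset _ _)
      (fun p hp _ => (Finset.mem_filter.1 hp).2.one_lt.le)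

lemma four_pow_le_primorial (n : ℕ) (hn : 0 < n) :
    4 ^ n ≤ 2 * n * ((2 * n) ^ Nat.sqrt (2 * n) * primorial (2 * n)) :=
  (Nat.four_pow_le_two_mul_self_mul_centralBinom n hn).trans
    (Nat.mul_le_mul_left _ (centralBinom_le_primorial n hn))

lemma err_isLittleO :
    (fun x : ℝ => 2 * Real.log 2 + Real.log x + Real.sqrt x * Real.log x)
      =o[atTop] (fun x : ℝ => x) := by
  have h1 : (fun _ : ℝ => 2 * Real.log 2) =o[atTop] (fun x : ℝ => x) :=
    Asymptotics.isLittleO_const_id_atTop _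
  have h2 : Real.log =o[atTop] (fun x : ℝ => x) := Real.isLittleO_log_id_atTop
  have h3 : (fun x : ℝ => Real.sqrt x * Real.log x) =o[atTop] (fun x : ℝ => x) := by
    have hb : (fun x : ℝ => Real.sqrt x) =O[atTop] (fun x : ℝ => Real.sqrt x) :=
      Asymptotics.isBigO_refl _ _
    have hlo : Real.log =o[atTop] (fun x : ℝ => x ^ (1/2 : ℝ)) :=
      isLittleO_log_rpow_atTop (by norm_num)
    have := hb.mul_isLittleO hlo
    refine this.trans_isBigO (Asymptotics.IsBigO.of_bound 1 ?_)
    filter_upwards [eventually_ge_atTop (0 : ℝ)] with x hx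
    rw [one_mul, ← Real.sqrt_eq_rpow, Real.norm_eq_abs, Real.norm_eq_abs,
      abs_of_nonneg (by positivity), Real.mul_self_sqrt hx, abs_of_nonneg hx]
  exact (h1.add h2).add h3

theorem chebyshev_theta_order :
    ∃ a > (0 : ℝ), ∃ b > (0 : ℝ), ∃ x₀ : ℝ, ∀ x ≥ x₀,
      a * x < theta x ∧ theta x < b * x := by
  have hev := (err_isLittleO.def (by norm_num : (0:ℝ) < 0.4)).and
    (eventually_ge_atTop (16 : ℝ))
  obtain ⟨x₀, hx₀⟩ := eventually_atTop.1 hev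
  refine ⟨1/4, by norm_num, 2, by norm_num, max x₀ 16, fun x hx => ?_⟩
  obtain ⟨herr, hx16⟩ := hx₀ x (le_trans (le_max_left _ _) hx)
  have hx16' : (16 : ℝ) ≤ x := le_trans (le_max_right _ _) hx
  have hxpos : (0 : ℝ) < x := by linarith
  set m := ⌊x⌋₊ with hm
  have hmx : (m : ℝ) ≤ x := Nat.floor_le (by linarith)
  have hxm : x - 1 ≤ (m : ℝ) := by
    have := Nat.lt_floor_add_one x; push_cast at this ⊢; linarith
  have hm16 : 16 ≤ m := Nat.le_floor (by exact_mod_cast hx16')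
  have hlog2 := Real.log_two_gt_d9
  have hlog2' := Real.log_two_lt_d9
  have hprimpos : (0:ℝ) < (primorial m : ℝ) := by exact_mod_cast primorial_pos m
  constructor
  · -- lower bound
    set n := m / 2 with hn
    have hnpos : 0 < n := by omega
    have h2nm : 2 * n ≤ m := by omega
    have h2nm' : m - 1 ≤ 2 * n := by omega
    have h2nx : ((2 * n : ℕ) : ℝ) ≤ x := le_trans (by exact_mod_cast h2nm) hmx
    have h2nx' : x - 2 ≤ ((2 * n : ℕ) : ℝ) := by
      have h : m ≤ 2 * n + 1 := by omega
      have h' : (m : ℝ) ≤ 2 * (n:ℝ) + 1 := by exact_mod_cast h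
      push_cast
      linarith
    have h2npos : (0:ℝ) < ((2 * n : ℕ) : ℝ) := by positivity
    have h2n1 : (1:ℝ) ≤ ((2 * n : ℕ) : ℝ) := by exact_mod_cast (by omega : 1 ≤ 2 * n)
    -- take logs of the nat inequality
    have H := four_pow_le_primorial n hnpos
    have Hr : ((4:ℝ)) ^ n ≤ (2 * n : ℕ) * (((2 * n : ℕ) : ℝ) ^ (Nat.sqrt (2*n)) *
        (primorial (2*n) : ℝ)) := by exact_mod_cast H
    have hprim2pos : (0:ℝ) < (primorial (2*n) : ℝ) := by exact_mod_cast primorial_pos (2*n)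
    have hlogH := Real.log_le_log (by positivity) Hr
    rw [Real.log_pow, Real.log_mul (by positivity) (by positivity),
      Real.log_mul (by positivity) hprim2pos.ne', Real.log_pow] at hlogH
    -- bound each term
    have hsqrt : ((Nat.sqrt (2*n) : ℕ) : ℝ) ≤ Real.sqrt x :=
      le_trans Real.nat_sqrt_le_real_sqrt (Real.sqrt_le_sqrt h2nx)
    have hlog2n : Real.log ((2*n : ℕ) : ℝ) ≤ Real.log x := Real.log_le_log h2npos h2nx
    have hlog2n0 : 0 ≤ Real.log ((2*n : ℕ) : ℝ) := Real.log_nonneg h2n1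
    have hsqrtlog : ((Nat.sqrt (2*n) : ℕ) : ℝ) * Real.log ((2*n : ℕ) : ℝ)
        ≤ Real.sqrt x * Real.log x := by
      apply mul_le_mul hsqrt hlog2n hlog2n0 (Real.sqrt_nonneg x)
    have hmono : Real.log (primorial (2*n) : ℝ) ≤ Real.log (primorial m : ℝ) := by
      apply Real.log_le_log hprim2pos
      exact_mod_cast primorial_mono' h2nm
    have hlog4 : Real.log 4 = 2 * Real.log 2 := by
      rw [show (4:ℝ) = 2^2 by norm_num, Real.log_pow]; push_cast; ring
    have hn4 : (x - 2) * Real.log 2 ≤ (n : ℝ) * Real.log 4 := by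
      rw [hlog4]
      have : (x - 2) * Real.log 2 ≤ ((2 * n : ℕ) : ℝ) * Real.log 2 := by
        apply mul_le_mul_of_nonneg_right h2nx' (by linarith)
      push_cast at this ⊢; linarith
    have key : (x - 2) * Real.log 2 - Real.log x - Real.sqrt x * Real.log x
        ≤ Real.log (primorial m : ℝ) := by
      have hlogx : Real.log ((2*n : ℕ) : ℝ) ≤ Real.log x := hlog2n
      nlinarith [hlogH, hn4, hsqrtlog, hmono, hlogx]
    -- use the little-o bound
    rw [Real.norm_eq_abs, Real.norm_eq_abs, abs_of_nonneg hxpos.le] at herr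
    have herr' : 2 * Real.log 2 + Real.log x + Real.sqrt x * Real.log x ≤ 0.4 * x :=
      le_trans (le_abs_self _) herr
    rw [theta_eq, ← hm]
    nlinarith [key, herr']
  · -- upper bound
    rw [theta_eq, ← hm]
    have h1 : (primorial m : ℝ) ≤ (4:ℝ) ^ m := by exact_mod_cast primorial_le_4_pow m
    have h2 : Real.log (primorial m : ℝ) ≤ (m : ℝ) * Real.log 4 := by
      calc Real.log (primorial m : ℝ) ≤ Real.log ((4:ℝ) ^ m) := Real.log_le_log hprimpos h1
        _ = (m : ℝ) * Real.log 4 := by rw [Real.log_pow]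
    have hlog4 : Real.log 4 = 2 * Real.log 2 := by
      rw [show (4:ℝ) = 2^2 by norm_num, Real.log_pow]; push_cast; ring
    have hml : (m : ℝ) * Real.log 4 ≤ x * Real.log 4 := by
      apply mul_le_mul_of_nonneg_right hmx
      rw [hlog4]; linarith
    have hxl : x * Real.log 4 < 2 * x := by
      rw [hlog4]
      have h2 : (2:ℝ) * Real.log 2 < 2 := by linarith
      calc x * (2 * Real.log 2) < x * 2 := mul_lt_mul_of_pos_left h2 hxpos
        _ = 2 * x := by ring
    linarith
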